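/- The Lukasiewicz conjunction does not satisfy property P1: there exist events A, H, B, K with A|H ⊆ B|K (Goodman–Nguyen inclusion) but (A|H) ∧_L (B|K) ≠ A|H. Indeed, when A|H ⊆ B|K one has (A|H) ∧_L (B|K) = AH | (H ∨ ¬H¬K), which is false on ¬H¬K while A|H is void there. -/
import Mathlib


/-- The three truth values of de Finetti's trivalent logic. -/
inductive TV : Type
  | true : TV
  | false : TV
  | void : TV
deriving DecidableEq

open Classical in
/-- The conditional event `E|F`: true on `E∩F`, false on `Eᶜ∩F`, void on `Fᶜ`. -/
noncomputable def condEv {Ω : Type*} (E F : Set Ω) : Ω → TV := fun ω =>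
  if ω ∈ F then (if ω ∈ E then TV.true else TV.false) else TV.void

/-- The Łukasiewicz conjunction
`(A|H) ∧_L (B|K) = AHBK | (AHBK ∨ ¬AH ∨ ¬BK ∨ ¬H¬K)`. -/
noncomputable def conjL {Ω : Type*} (A H B K : Set Ω) : Ω → TV :=
  condEv (A ∩ H ∩ (B ∩ K)) (A ∩ H ∩ (B ∩ K) ∪ Aᶜ ∩ H ∪ Bᶜ ∩ K ∪ Hᶜ ∩ Kᶜ)

/-- Failure of P1 for `∧_L`: whenever the Goodman–Nguyen inclusion
`A|H ⊆ B|K` holds (`AH ⊆ BK` and `¬BK ⊆ ¬AH`) one has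
`(A|H) ∧_L (B|K) = AH | (H ∨ ¬H¬K)`, which (when `¬H¬K ≠ ∅`) differs from
`A|H`, being false on `¬H¬K` while `A|H` is void there.  In particular there
exist events `A, H, B, K` with `A|H ⊆ B|K` but `(A|H) ∧_L (B|K) ≠ A|H`. -/
theorem conjL_fails_P1 :
    (∀ (Ω : Type) (A H B K : Set Ω),
        A ∩ H ⊆ B ∩ K → Bᶜ ∩ K ⊆ Aᶜ ∩ H →
          conjL A H B K = condEv (A ∩ H) (H ∪ Hᶜ ∩ Kᶜ)) ∧
    (∃ (Ω : Type) (A H B K : Set Ω),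
        H.Nonempty ∧ K.Nonempty ∧ (Hᶜ ∩ Kᶜ).Nonempty ∧
        A ∩ H ⊆ B ∩ K ∧ Bᶜ ∩ K ⊆ Aᶜ ∩ H ∧
        conjL A H B K ≠ condEv A H) := by
  constructor
  · intro Ω A H B K h1 h2
    funext ω
    have p1 : ω ∈ A → ω ∈ H → ω ∈ B ∧ ω ∈ K := fun a h => h1 ⟨a, h⟩
    have p2 : ω ∉ B → ω ∈ K → ω ∉ A ∧ ω ∈ H := fun b k => h2 ⟨b, k⟩
    clear h1 h2
    simp only [conjL, condEv, Set.mem_union, Set.mem_inter_iff, Set.mem_compl_iff]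
    by_cases hA : ω ∈ A <;> by_cases hH : ω ∈ H <;> by_cases hB : ω ∈ B <;>
      by_cases hK : ω ∈ K <;> simp_all
  · refine ⟨Fin 3, Set.univ, {0}, Set.univ, {0, 1}, ⟨0, rfl⟩, ⟨0, by simp⟩,
      ⟨2, by simp⟩, by simp, by simp, ?_⟩
    intro h
    have := congrFun h 2
    simp [conjL, condEv, Set.mem_insert_iff] at this
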